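/- Let a > 0 and in the plane let B = (−a/2, 0), C = (a/2, 0), and A = (A_x, A_y) with A_y > 0 and A_x ≥ 0 (equivalently dist(A, C) ≤ dist(A, B)). Let β = ∠ A B C; note β < π/2. For φ ∈ [0, β] define D(φ) = (0, (a/2)·tan φ). Then the function φ ↦ dist(B, D(φ)) is strictly increasing on [0, β], and the function φ ↦ dist(A, D(φ)) + dist(B, D(φ)) is non-increasing (antitone) on [0, β]. -/

import Mathlib

open EuclideanGeometry

/-- A point of the plane given by its two coordinates. -/
noncomputable def pt (x y : ℝ) : EuclideanSpace ℝ (Fin 2) := !₂[x, y]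

lemma dist_pt (x y x' y' : ℝ) :
    dist (pt x y) (pt x' y') = Real.sqrt ((x - x') ^ 2 + (y - y') ^ 2) := by
  simp [pt, EuclideanSpace.dist_eq, Fin.sum_univ_two, Real.dist_eq, sq_abs]

lemma inner_pt (x y x' y' u v : ℝ) :
    (inner ℝ ((pt x y) -ᵥ (pt x' y')) ((pt u v) -ᵥ (pt x' y')) : ℝ)
      = (x - x') * (u - x') + (y - y') * (v - y') := by
  rw [vsub_eq_sub, vsub_eq_sub]
  simp [pt, PiLp.inner_apply, Fin.sum_univ_two]
  ring

lemma norm_pt (x y x' y' : ℝ) :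
    ‖(pt x y) -ᵥ (pt x' y')‖ = Real.sqrt ((x - x') ^ 2 + (y - y') ^ 2) := by
  rw [vsub_eq_sub]
  simp [pt, EuclideanSpace.norm_eq, Fin.sum_univ_two]

/-- The key analytic fact: `t ↦ √(Ax² + (Ay−t)²) + √(c² + t²)` is antitone on
`[0, c·Ay/(Ax+c)]`. -/
lemma g_anti (Ax Ay c : ℝ) (hc : 0 < c) (hAy : 0 < Ay) (hAx : 0 ≤ Ax) :
    AntitoneOn (fun t : ℝ => Real.sqrt (Ax ^ 2 + (Ay - t) ^ 2) + Real.sqrt (c ^ 2 + t ^ 2))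
      (Set.Icc 0 (c * Ay / (Ax + c))) := by
  set T : ℝ := c * Ay / (Ax + c) with hT
  have hAc : 0 < Ax + c := by linarith
  have hTAy : T ≤ Ay := by
    rw [hT, div_le_iff₀ hAc]; nlinarith
  have hderiv : ∀ x ∈ Set.Ioo (0 : ℝ) T,
      HasDerivAt (fun t : ℝ => Real.sqrt (Ax ^ 2 + (Ay - t) ^ 2) + Real.sqrt (c ^ 2 + t ^ 2))
        (-(Ay - x) / Real.sqrt (Ax ^ 2 + (Ay - x) ^ 2)
          + x / Real.sqrt (c ^ 2 + x ^ 2)) x := by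
    intro x hx
    have hx0 : 0 < x := hx.1
    have hxAy : x < Ay := lt_of_lt_of_le hx.2 hTAy
    have h1pos : 0 < Ax ^ 2 + (Ay - x) ^ 2 := by nlinarith
    have h2pos : 0 < c ^ 2 + x ^ 2 := by positivity
    have hs1 : 0 < Real.sqrt (Ax ^ 2 + (Ay - x) ^ 2) := Real.sqrt_pos.2 h1pos
    have hs2 : 0 < Real.sqrt (c ^ 2 + x ^ 2) := Real.sqrt_pos.2 h2pos
    have hi1 : HasDerivAt (fun t : ℝ => Ax ^ 2 + (Ay - t) ^ 2) (-(2 * (Ay - x))) x := by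
      have h := (((hasDerivAt_id x).const_sub Ay).pow 2).const_add (Ax ^ 2)
      refine h.congr_deriv ?_
      simp
    have hi2 : HasDerivAt (fun t : ℝ => c ^ 2 + t ^ 2) (2 * x) x := by
      have h := ((hasDerivAt_id x).pow 2).const_add (c ^ 2)
      refine h.congr_deriv ?_
      simp
    have d1 : HasDerivAt (fun t : ℝ => Real.sqrt (Ax ^ 2 + (Ay - t) ^ 2))
        (-(Ay - x) / Real.sqrt (Ax ^ 2 + (Ay - x) ^ 2)) x := by
      have h := (Real.hasDerivAt_sqrt h1pos.ne').comp x hi1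
      refine h.congr_deriv ?_
      field_simp
    have d2 : HasDerivAt (fun t : ℝ => Real.sqrt (c ^ 2 + t ^ 2))
        (x / Real.sqrt (c ^ 2 + x ^ 2)) x := by
      have h := (Real.hasDerivAt_sqrt h2pos.ne').comp x hi2
      refine h.congr_deriv ?_
      field_simp
    exact d1.add d2
  apply antitoneOn_of_deriv_nonpos (convex_Icc 0 T)
  · exact (Real.continuous_sqrt.comp (by continuity)).add
      (Real.continuous_sqrt.comp (by continuity)) |>.continuousOn
  · rw [interior_Icc]
    intro x hx
    exact (hderiv x hx).differentiableAt.differentiableWithinAt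
  · rw [interior_Icc]
    intro x hx
    rw [(hderiv x hx).deriv]
    have hx0 : 0 < x := hx.1
    have hxT : x < T := hx.2
    have hxAy : x < Ay := lt_of_lt_of_le hxT hTAy
    have h1pos : 0 < Ax ^ 2 + (Ay - x) ^ 2 := by nlinarith
    have h2pos : 0 < c ^ 2 + x ^ 2 := by positivity
    have hs1 : 0 < Real.sqrt (Ax ^ 2 + (Ay - x) ^ 2) := Real.sqrt_pos.2 h1pos
    have hs2 : 0 < Real.sqrt (c ^ 2 + x ^ 2) := Real.sqrt_pos.2 h2pos
    -- key inequality: x * s1 ≤ (Ay - x) * s2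
    have hkey : x * (Ax + c) ≤ c * Ay := by
      rw [hT, lt_div_iff₀ hAc] at hxT
      linarith
    have hsq : x ^ 2 * (Ax ^ 2 + (Ay - x) ^ 2) ≤ (Ay - x) ^ 2 * (c ^ 2 + x ^ 2) := by
      have h1 : x * Ax ≤ c * (Ay - x) := by nlinarith
      have h2 : 0 ≤ x * Ax := mul_nonneg hx0.le hAx
      nlinarith
    have hmain : x * Real.sqrt (Ax ^ 2 + (Ay - x) ^ 2)
        ≤ (Ay - x) * Real.sqrt (c ^ 2 + x ^ 2) := by
      have h := Real.sqrt_le_sqrt hsq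
      rw [Real.sqrt_mul (sq_nonneg x), Real.sqrt_mul (sq_nonneg (Ay - x)),
        Real.sqrt_sq hx0.le, Real.sqrt_sq (by linarith : (0:ℝ) ≤ Ay - x)] at h
      exact h
    have : x / Real.sqrt (c ^ 2 + x ^ 2)
        ≤ (Ay - x) / Real.sqrt (Ax ^ 2 + (Ay - x) ^ 2) := by
      rw [div_le_div_iff₀ hs2 hs1]
      exact hmain
    have hneg : -(Ay - x) / Real.sqrt (Ax ^ 2 + (Ay - x) ^ 2)
        = -((Ay - x) / Real.sqrt (Ax ^ 2 + (Ay - x) ^ 2)) := by ring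
    rw [hneg]
    linarith

/-- With `B = (−a/2, 0)`, `C = (a/2, 0)` and `A = (A_x, A_y)` with `A_y > 0`,
`A_x ≥ 0`, and `β = ∠ A B C < π/2`, along the perpendicular bisector
parameterized by `D(φ) = (0, (a/2)·tan φ)` for `φ ∈ [0, β]`, the distance
`dist(B, D(φ))` is strictly increasing in `φ`, while
`dist(A, D(φ)) + dist(B, D(φ))` is non-increasing in `φ`. -/
theorem bisector_branch_monotonicity
    (a Ax Ay : ℝ) (ha : 0 < a) (hAy : 0 < Ay) (hAx : 0 ≤ Ax)
    (A B C : EuclideanSpace ℝ (Fin 2))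
    (hA : A = pt Ax Ay) (hB : B = pt (-a / 2) 0) (hC : C = pt (a / 2) 0)
    (β : ℝ) (hβ : β = ∠ A B C)
    (D : ℝ → EuclideanSpace ℝ (Fin 2))
    (hD : ∀ φ : ℝ, D φ = pt 0 ((a / 2) * Real.tan φ)) :
    β < Real.pi / 2 ∧
    StrictMonoOn (fun φ => dist B (D φ)) (Set.Icc 0 β) ∧
    AntitoneOn (fun φ => dist A (D φ) + dist B (D φ)) (Set.Icc 0 β) := by
  set c : ℝ := a / 2 with hc'
  have hc : 0 < c := by positivity
  have hAc : 0 < Ax + c := by linarith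
  set r : ℝ := Ay / (Ax + c) with hr'
  have hr : 0 < r := by positivity
  set nrm : ℝ := Real.sqrt ((Ax + c) ^ 2 + Ay ^ 2) with hnrm'
  have hnrm : 0 < nrm := Real.sqrt_pos.2 (by positivity)
  -- cos β
  have hcos : Real.cos β = (Ax + c) / nrm := by
    rw [hβ, hA, hB, hC, EuclideanGeometry.angle, InnerProductGeometry.cos_angle,
      inner_pt, norm_pt, norm_pt]
    have h1 : Ax - -a / 2 = Ax + c := by rw [hc']; ring
    have h2 : a / 2 - -a / 2 = a := by ring
    rw [h1, h2]
    have h3 : Real.sqrt (a ^ 2 + (0 - 0) ^ 2) = a := by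
      rw [show a ^ 2 + (0 - 0 : ℝ) ^ 2 = a ^ 2 by ring, Real.sqrt_sq ha.le]
    rw [h3, hnrm', show (Ay - 0 : ℝ) = Ay by ring,
      show (Ax + c) * a + Ay * (0 - 0) = a * (Ax + c) by ring]
    rw [mul_comm (Real.sqrt ((Ax + c) ^ 2 + Ay ^ 2)) a, mul_div_mul_left _ _ ha.ne']
  -- β = arctan r
  have hcosr : Real.cos (Real.arctan r) = (Ax + c) / nrm := by
    rw [Real.cos_arctan]
    have h1 : 1 + r ^ 2 = ((Ax + c) ^ 2 + Ay ^ 2) / (Ax + c) ^ 2 := by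
      rw [hr']
      field_simp
    rw [h1, Real.sqrt_div (by positivity) _, Real.sqrt_sq hAc.le, hnrm', one_div_div]
  have hβeq : β = Real.arctan r := by
    have h1 : Real.arccos (Real.cos β) = β :=
      Real.arccos_cos (hβ ▸ EuclideanGeometry.angle_nonneg A B C)
        (hβ ▸ EuclideanGeometry.angle_le_pi A B C)
    have h2 : Real.arccos (Real.cos (Real.arctan r)) = Real.arctan r :=
      Real.arccos_cos (by rw [← Real.arctan_zero]; exact Real.arctan_strictMono.monotone hr.le)
        (le_of_lt (lt_trans (Real.arctan_lt_pi_div_two r) (by linarith [Real.pi_pos])))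
    rw [← h1, ← h2, hcos, hcosr]
  have hβlt : β < Real.pi / 2 := hβeq ▸ Real.arctan_lt_pi_div_two r
  have htanβ : Real.tan β = r := by rw [hβeq, Real.tan_arctan]
  -- distance formulas
  have hBD : ∀ φ : ℝ, dist B (D φ) = Real.sqrt (c ^ 2 + (c * Real.tan φ) ^ 2) := by
    intro φ
    rw [hB, hD, dist_pt]
    congr 1
    rw [hc']; ring
  have hAD : ∀ φ : ℝ, dist A (D φ) = Real.sqrt (Ax ^ 2 + (Ay - c * Real.tan φ) ^ 2) := by
    intro φ
    rw [hA, hD, dist_pt]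
    congr 1
    rw [hc']; ring
  -- tangent facts on the interval
  have htan : ∀ φ ∈ Set.Icc (0 : ℝ) β, 0 ≤ Real.tan φ ∧ Real.tan φ ≤ Real.tan β := by
    intro φ hφ
    constructor
    · exact Real.tan_nonneg_of_nonneg_of_le_pi_div_two hφ.1 (le_of_lt (lt_of_le_of_lt hφ.2 hβlt))
    · rcases eq_or_lt_of_le hφ.2 with h | h
      · rw [h]
      · exact le_of_lt (Real.tan_lt_tan_of_nonneg_of_lt_pi_div_two hφ.1 hβlt h)
  refine ⟨hβlt, ?_, ?_⟩
  · -- strict monotonicity of dist B (D φ)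
    intro φ₁ h₁ φ₂ h₂ h12
    simp only [hBD]
    apply Real.sqrt_lt_sqrt (by positivity)
    have ht1 := htan φ₁ h₁
    have ht2 := htan φ₂ h₂
    have hlt : Real.tan φ₁ < Real.tan φ₂ :=
      Real.tan_lt_tan_of_nonneg_of_lt_pi_div_two h₁.1 (lt_of_le_of_lt h₂.2 hβlt) h12
    have hp : Real.tan φ₁ ^ 2 < Real.tan φ₂ ^ 2 := by
      exact pow_lt_pow_left₀ hlt ht1.1 (by norm_num)
    nlinarith [mul_lt_mul_of_pos_left hp (pow_pos hc 2)]
  · -- antitonicity of the sum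
    have hg := g_anti Ax Ay c hc hAy hAx
    have hTr : c * Real.tan β = c * Ay / (Ax + c) := by
      rw [htanβ, hr']; ring
    intro φ₁ h₁ φ₂ h₂ h12
    have ht1 := htan φ₁ h₁
    have ht2 := htan φ₂ h₂
    have hm1 : c * Real.tan φ₁ ∈ Set.Icc (0 : ℝ) (c * Ay / (Ax + c)) := by
      constructor
      · exact mul_nonneg hc.le ht1.1
      · rw [← hTr]; exact mul_le_mul_of_nonneg_left ht1.2 hc.le
    have hm2 : c * Real.tan φ₂ ∈ Set.Icc (0 : ℝ) (c * Ay / (Ax + c)) := by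
      constructor
      · exact mul_nonneg hc.le ht2.1
      · rw [← hTr]; exact mul_le_mul_of_nonneg_left ht2.2 hc.le
    have hle : c * Real.tan φ₁ ≤ c * Real.tan φ₂ := by
      apply mul_le_mul_of_nonneg_left _ hc.le
      rcases eq_or_lt_of_le h12 with h | h
      · rw [h]
      · exact le_of_lt (Real.tan_lt_tan_of_nonneg_of_lt_pi_div_two h₁.1
          (lt_of_le_of_lt h₂.2 hβlt) h)
    have := hg hm1 hm2 hle
    simp only [hAD, hBD]
    simpa using this
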